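/- Let F be a field of characteristic 0 with derivation δ, and let D: Mₙ(F) → Mₙ(F) be an additive map satisfying the Leibniz rule D(xy) = D(x)y + xD(y) and D(cI) = δ(c)I for c ∈ F. Then there exists a matrix P ∈ Mₙ(F) such that D(x) = x' + Px - xP for all x ∈ Mₙ(F), where x' denotes entrywise derivation. Moreover P may be chosen with trace zero. -/

import Mathlib

/-- Every derivation on Mₙ(F) compatible with δ on scalars is of the form
x ↦ x' + Px - xP for some traceless matrix P. -/
theorem derivation_on_matrix_ring_is_inner (F : Type*) [Field F] [CharZero F] (n : ℕ)
    (δ : F → F)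
    (hadd : ∀ a b : F, δ (a + b) = δ a + δ b)
    (hmul : ∀ a b : F, δ (a * b) = δ a * b + a * δ b)
    (D : Matrix (Fin n) (Fin n) F → Matrix (Fin n) (Fin n) F)
    (hDadd : ∀ x y, D (x + y) = D x + D y)
    (hDmul : ∀ x y, D (x * y) = D x * y + x * D y)
    (hDscalar : ∀ c : F, D (c • (1 : Matrix (Fin n) (Fin n) F)) = δ c • 1) :
    ∃ P : Matrix (Fin n) (Fin n) F, Matrix.trace P = 0 ∧
      ∀ x, D x = x.map δ + P * x - x * P := by
  classical
  rcases Nat.eq_zero_or_pos n with hn | hn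
  · subst hn
    refine ⟨0, by simp [Matrix.trace], fun x => ?_⟩
    ext i j
    exact i.elim0
  -- δ as an additive monoid hom
  set δ' : F →+ F := AddMonoidHom.mk' δ hadd with hδ'
  have hδ0 : δ 0 = 0 := map_zero δ'
  have hδ1 : δ 1 = 0 := by
    have h1 := hmul 1 1
    simp at h1
    exact h1
  have hδsum : ∀ (s : Finset (Fin n)) (f : Fin n → F),
      δ (∑ k ∈ s, f k) = ∑ k ∈ s, δ (f k) := fun s f => map_sum δ' f s
  -- entrywise derivative is a δ-derivation
  have hmapmul : ∀ x y : Matrix (Fin n) (Fin n) F,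
      (x * y).map δ = x.map δ * y + x * y.map δ := by
    intro x y
    ext i j
    simp only [Matrix.map_apply, Matrix.mul_apply, Matrix.add_apply, hδsum]
    rw [← Finset.sum_add_distrib]
    exact Finset.sum_congr rfl fun k _ => hmul _ _
  -- the "algebraic part" E of D
  set E : Matrix (Fin n) (Fin n) F → Matrix (Fin n) (Fin n) F :=
    fun x => D x - x.map δ with hE
  have hmap0 : (0 : Matrix (Fin n) (Fin n) F).map δ = 0 := by
    ext i j; simp [Matrix.map_apply, hδ0]
  have hD0 : D 0 = 0 := by
    have h := hDadd 0 0
    rw [add_zero] at h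
    exact (left_eq_add.mp h)
  have hE0 : E 0 = 0 := by simp [hE, hD0, hmap0]
  have hEadd : ∀ x y, E (x + y) = E x + E y := by
    intro x y
    simp only [hE, hDadd]
    have : (x + y).map δ = x.map δ + y.map δ := by
      ext i j; simp [Matrix.map_apply, hadd]
    rw [this]; abel
  have hEmul : ∀ x y, E (x * y) = E x * y + x * E y := by
    intro x y
    simp only [hE, hDmul, hmapmul, sub_mul, mul_sub]
    abel
  have hmapsmul1 : ∀ c : F, (c • (1 : Matrix (Fin n) (Fin n) F)).map δ = δ c • 1 := by
    intro c
    ext i j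
    simp only [Matrix.map_apply, Matrix.smul_apply, Matrix.one_apply, smul_eq_mul]
    by_cases h : i = j <;> simp [h, hmul, hδ1, hδ0]
  have hEscalar : ∀ c : F, E (c • (1 : Matrix (Fin n) (Fin n) F)) = 0 := by
    intro c; simp [hE, hDscalar, hmapsmul1]
  have hEsmul : ∀ (c : F) x, E (c • x) = c • E x := by
    intro c x
    have h1 : c • x = (c • (1 : Matrix (Fin n) (Fin n) F)) * x := by
      rw [smul_mul_assoc, one_mul]
    rw [h1, hEmul, hEscalar, smul_mul_assoc, one_mul]
    simp [mul_smul_comm]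
  -- the basis matrices
  set e : Fin n → Fin n → Matrix (Fin n) (Fin n) F :=
    fun i j => Matrix.single i j 1 with he
  set i0 : Fin n := ⟨0, hn⟩ with hi0
  set P0 : Matrix (Fin n) (Fin n) F := ∑ k, E (e k i0) * e i0 k with hP0
  have hsumdiag : ∑ k, e k i0 * e i0 k = 1 := by
    ext a b
    simp only [Matrix.sum_apply, he, Matrix.single_mul_single_same, one_mul]
    have hent : ∀ k, Matrix.single k k (1 : F) a b
        = if k = a then (if a = b then 1 else 0) else 0 := by
      intro k
      by_cases h1 : k = a
      · subst h1
        by_cases h2 : k = b <;> simp [Matrix.single, h2]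
      · simp [Matrix.single, h1]
    rw [Finset.sum_congr rfl fun k _ => hent k]
    simp [Matrix.one_apply]
  -- key identity on basis matrices
  have key : ∀ i j, E (e i j) = P0 * e i j - e i j * P0 := by
    intro i j
    have h1 : P0 * e i j = E (e i i0) * e i0 j := by
      rw [hP0, Finset.sum_mul]
      rw [Fintype.sum_eq_single i]
      · rw [mul_assoc]
        simp [he]
      · intro k hk
        rw [mul_assoc]
        simp only [he]
        rw [Matrix.single_mul_single_of_ne (h := hk), mul_zero]
    have h2 : e i j * P0 = E (e i i0) * e i0 j - E (e i j) := by
      rw [hP0, Finset.mul_sum]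
      have h3 : ∀ k, e i j * (E (e k i0) * e i0 k)
          = E (e i j * e k i0) * e i0 k - E (e i j) * (e k i0 * e i0 k) := by
        intro k
        rw [hEmul (e i j) (e k i0), add_mul, ← mul_assoc, ← mul_assoc]
        abel
      rw [Finset.sum_congr rfl fun k _ => h3 k, Finset.sum_sub_distrib,
        ← Finset.mul_sum, hsumdiag, mul_one]
      congr 1
      rw [Fintype.sum_eq_single j]
      · simp [he]
      · intro k hk
        simp only [he]
        rw [Matrix.single_mul_single_of_ne (h := Ne.symm hk), hE0, zero_mul]
    rw [h1, h2]
    abel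
  -- key identity for all matrices
  have keyall : ∀ x, E x = P0 * x - x * P0 := by
    intro x
    induction x using Matrix.induction_on' with
    | h_zero => simp [hE0]
    | h_add p q hp hq =>
        rw [hEadd, hp, hq, mul_add, add_mul]
        abel
    | h_std_basis i j c =>
        have h1 : Matrix.single i j c = c • e i j := by
          rw [he, Matrix.smul_single, smul_eq_mul, mul_one]
        rw [h1, hEsmul, key i j, smul_sub, mul_smul_comm, smul_mul_assoc]
  -- adjust trace
  set c : F := Matrix.trace P0 / n with hc
  refine ⟨P0 - c • 1, ?_, ?_⟩
  · rw [Matrix.trace_sub, Matrix.trace_smul, Matrix.trace_one]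
    have hncast : (n : F) ≠ 0 := Nat.cast_ne_zero.mpr hn.ne'
    simp only [hc, smul_eq_mul, Fintype.card_fin]
    field_simp
    simp
  · intro x
    have hx := keyall x
    have h3 : x.map δ + (P0 - c • 1) * x - x * (P0 - c • 1)
        = x.map δ + (P0 * x - x * P0) := by
      rw [sub_mul, mul_sub, smul_mul_assoc, mul_smul_comm, one_mul, mul_one]
      abel
    rw [h3, ← hx]
    simp only [hE]
    abel
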